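/- (Pre-Iwasawa decomposition.) Let S = [[A, B],[C, D]] be a symplectic 2n×2n matrix written in n×n blocks. Then there exist unique matrices P, L, R such that S = V_P M_L R, where P is real symmetric, L is real symmetric positive definite, R is both symplectic and orthogonal, V_P = [[I, 0],[−P, I]] and M_L = [[L⁻¹, 0],[0, L]]. Moreover L = (AAᵀ + BBᵀ)^{−1/2}, P = −(CAᵀ + DBᵀ)(AAᵀ + BBᵀ)^{−1}, and R = [[U, V],[−V, U]] with U = (AAᵀ + BBᵀ)^{−1/2} A and V = (AAᵀ + BBᵀ)^{−1/2} B. -/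

import Mathlib

open Matrix

/-- The standard symplectic matrix `J = [[0, I],[−I, 0]]`. -/
def stdJ (n : ℕ) : Matrix (Fin n ⊕ Fin n) (Fin n ⊕ Fin n) ℝ :=
  fromBlocks 0 1 (-1) 0

/-- A real `2n×2n` matrix is symplectic if `Sᵀ J S = J`. -/
def IsSymplecticMat {n : ℕ} (S : Matrix (Fin n ⊕ Fin n) (Fin n ⊕ Fin n) ℝ) : Prop :=
  Sᵀ * stdJ n * S = stdJ n

/-- `V_P = [[I, 0],[−P, I]]`. -/
def VP {n : ℕ} (P : Matrix (Fin n) (Fin n) ℝ) : Matrix (Fin n ⊕ Fin n) (Fin n ⊕ Fin n) ℝ :=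
  fromBlocks 1 0 (-P) 1

/-- `M_L = [[L⁻¹, 0],[0, L]]`. -/
noncomputable def ML {n : ℕ} (L : Matrix (Fin n) (Fin n) ℝ) : Matrix (Fin n ⊕ Fin n) (Fin n ⊕ Fin n) ℝ :=
  fromBlocks L⁻¹ 0 0 L

/-- The pre-Iwasawa decomposition conditions for `S = [[A,B],[C,D]]`: `S = V_P M_L R` with `P`
symmetric, `L` symmetric positive definite, and `R` symplectic and orthogonal. -/
def PreIwasawaDecomp {n : ℕ} (A B C D : Matrix (Fin n) (Fin n) ℝ)
    (PLR : Matrix (Fin n) (Fin n) ℝ × Matrix (Fin n) (Fin n) ℝ ×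
      Matrix (Fin n ⊕ Fin n) (Fin n ⊕ Fin n) ℝ) : Prop :=
  PLR.1.IsSymm ∧ PLR.2.1.IsSymm ∧ PLR.2.1.PosDef ∧ IsSymplecticMat PLR.2.2 ∧
    PLR.2.2ᵀ * PLR.2.2 = 1 ∧ fromBlocks A B C D = VP PLR.1 * ML PLR.2.1 * PLR.2.2

lemma aux_posDef {m : Type*} [Fintype m] [DecidableEq m]
    {M : Matrix m m ℝ} (h : M.PosSemidef) (hinj : ∀ x, M *ᵥ x = 0 → x = 0) : M.PosDef := by
  refine PosDef.of_dotProduct_mulVec_pos h.1 fun x hx => ?_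
  rcases (h.dotProduct_mulVec_nonneg x).lt_or_eq with hlt | heq
  · exact hlt
  · exact absurd (hinj x ((h.dotProduct_mulVec_zero_iff x).mp heq.symm)) hx

/-- Pre-Iwasawa decomposition: every symplectic matrix `S = [[A,B],[C,D]]` can be written in a
unique way as `S = V_P M_L R` with `P` symmetric, `L` symmetric positive definite, and `R`
symplectic and orthogonal; moreover `L = (AAᵀ + BBᵀ)^{−1/2}` (i.e. `L² = (AAᵀ + BBᵀ)⁻¹`),
`P = −(CAᵀ + DBᵀ)(AAᵀ + BBᵀ)⁻¹`, and `R = [[U, V],[−V, U]]` with `U = LA`, `V = LB`. -/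
theorem pre_iwasawa_decomposition
    (n : ℕ) (hn : 1 ≤ n) (A B C D : Matrix (Fin n) (Fin n) ℝ)
    (hS : IsSymplecticMat (fromBlocks A B C D)) :
    (∃! PLR : Matrix (Fin n) (Fin n) ℝ × Matrix (Fin n) (Fin n) ℝ ×
        Matrix (Fin n ⊕ Fin n) (Fin n ⊕ Fin n) ℝ, PreIwasawaDecomp A B C D PLR) ∧
      ∀ P L : Matrix (Fin n) (Fin n) ℝ, ∀ R : Matrix (Fin n ⊕ Fin n) (Fin n ⊕ Fin n) ℝ,
        PreIwasawaDecomp A B C D (P, L, R) →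
          L * L = (A * Aᵀ + B * Bᵀ)⁻¹ ∧
          P = -((C * Aᵀ + D * Bᵀ) * (A * Aᵀ + B * Bᵀ)⁻¹) ∧
          R = fromBlocks (L * A) (L * B) (-(L * B)) (L * A) := by
  classical
  have hSJ : (fromBlocks A B C D)ᵀ * stdJ n * fromBlocks A B C D = stdJ n := hS
  set S := fromBlocks A B C D with hSdef
  set Jm := stdJ n with hJdef
  have hJJ : Jm * Jm = -1 := by
    have h1 : Jm * Jm = fromBlocks (-1) 0 0 (-1) := by
      simp [hJdef, stdJ, fromBlocks_multiply]
    rw [h1, ← fromBlocks_one, fromBlocks_neg, neg_zero]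
  have hTS : (-Jm * Sᵀ * Jm) * S = 1 := by
    have h2 : (-Jm * Sᵀ * Jm) * S = -(Jm * (Sᵀ * Jm * S)) := by noncomm_ring
    rw [h2, hSJ, hJJ, neg_neg]
  have hST : S * (-Jm * Sᵀ * Jm) = 1 := mul_eq_one_comm.mpr hTS
  have hS' : S * Jm * Sᵀ = Jm := by
    have h2 : S * Jm * Sᵀ * Jm = -1 := by
      have h3 : -(S * (-Jm * Sᵀ * Jm)) = S * Jm * Sᵀ * Jm := by noncomm_ring
      rw [← h3, hST]
    have h4 : S * Jm * Sᵀ * Jm * Jm = -1 * Jm := by rw [h2]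
    rw [mul_assoc (S * Jm * Sᵀ), hJJ] at h4
    simpa using h4
  -- block identities from S J Sᵀ = J
  have hSJS := hS'
  rw [hSdef, hJdef] at hSJS
  simp only [stdJ, fromBlocks_transpose, fromBlocks_multiply] at hSJS
  simp [-neg_mul] at hSJS
  obtain ⟨k1, k2, k3, k4⟩ := hSJS
  have hABt : A * Bᵀ = B * Aᵀ := (neg_add_eq_zero.mp k1).symm
  have hADt : A * Dᵀ - B * Cᵀ = 1 := by rw [sub_eq_neg_add]; exact k2
  have hADtT : D * Aᵀ - C * Bᵀ = 1 := by
    have h := congrArg Matrix.transpose hADt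
    simpa [transpose_sub, transpose_mul] using h
  -- names for the blocks of S * Sᵀ
  set Mm := A * Aᵀ + B * Bᵀ with hMdef
  set X := A * Cᵀ + B * Dᵀ with hXdef
  set Y := C * Aᵀ + D * Bᵀ with hYdef
  set Nn := C * Cᵀ + D * Dᵀ with hNdef
  have hSSt : S * Sᵀ = fromBlocks Mm X Y Nn := by
    rw [hSdef, fromBlocks_transpose, fromBlocks_multiply]
  have hGJG : fromBlocks Mm X Y Nn * Jm * fromBlocks Mm X Y Nn = Jm := by
    rw [← hSSt]
    calc S * Sᵀ * Jm * (S * Sᵀ) = S * (Sᵀ * Jm * S) * Sᵀ := by noncomm_ring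
    _ = Jm := by rw [hSJ, hS']
  rw [hJdef] at hGJG
  simp only [stdJ, fromBlocks_multiply] at hGJG
  simp [-neg_mul] at hGJG
  obtain ⟨e1, e2, e3, e4⟩ := hGJG
  have hMY : Mm * Y = X * Mm := (neg_add_eq_zero.mp e1).symm
  -- G (J S) = S J
  have hJS : Jm * S = fromBlocks C D (-A) (-B) := by
    rw [hJdef, hSdef]; simp [stdJ, fromBlocks_multiply]
  have hSJm : S * Jm = fromBlocks (-B) A (-D) C := by
    rw [hJdef, hSdef]; simp [stdJ, fromBlocks_multiply]
  have hGJS : fromBlocks Mm X Y Nn * fromBlocks C D (-A) (-B) = fromBlocks (-B) A (-D) C := by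
    rw [← hJS, ← hSJm, ← hSSt]
    calc S * Sᵀ * (Jm * S) = S * (Sᵀ * Jm * S) := by noncomm_ring
    _ = S * Jm := by rw [hSJ]
  simp only [fromBlocks_multiply] at hGJS
  simp [-neg_mul] at hGJS
  obtain ⟨f1, f2, f3, f4⟩ := hGJS
  have hMC : Mm * C = X * A - B := by
    rw [← sub_eq_add_neg, sub_eq_iff_eq_add] at f1
    rw [f1]; abel
  have hMD : Mm * D = X * B + A := by
    rw [← sub_eq_add_neg, sub_eq_iff_eq_add] at f2
    rw [f2]; abel
  -- positive definiteness of Mm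
  have hps1 : (A * Aᵀ).PosSemidef := by
    simpa [conjTranspose_eq_transpose_of_trivial] using posSemidef_self_mul_conjTranspose A
  have hps2 : (B * Bᵀ).PosSemidef := by
    simpa [conjTranspose_eq_transpose_of_trivial] using posSemidef_self_mul_conjTranspose B
  have hMinj : ∀ x, Mm *ᵥ x = 0 → x = 0 := by
    intro x hx
    have hdot : x ⬝ᵥ ((A * Aᵀ) *ᵥ x) + x ⬝ᵥ ((B * Bᵀ) *ᵥ x) = 0 := by
      have h0 : x ⬝ᵥ (Mm *ᵥ x) = 0 := by rw [hx, dotProduct_zero]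
      rw [hMdef, add_mulVec, dotProduct_add] at h0
      exact h0
    have n1 : 0 ≤ x ⬝ᵥ ((A * Aᵀ) *ᵥ x) := by simpa using hps1.dotProduct_mulVec_nonneg x
    have n2 : 0 ≤ x ⬝ᵥ ((B * Bᵀ) *ᵥ x) := by simpa using hps2.dotProduct_mulVec_nonneg x
    have z1 : x ⬝ᵥ ((A * Aᵀ) *ᵥ x) = 0 := by linarith
    have z2 : x ⬝ᵥ ((B * Bᵀ) *ᵥ x) = 0 := by linarith
    have key1 : ∀ E : Matrix (Fin n) (Fin n) ℝ, x ⬝ᵥ ((E * Eᵀ) *ᵥ x) = 0 → Eᵀ *ᵥ x = 0 := by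
      intro E hE
      have hE' : x ⬝ᵥ ((E * Eᵀ) *ᵥ x) = (Eᵀ *ᵥ x) ⬝ᵥ (Eᵀ *ᵥ x) := by
        rw [← mulVec_mulVec, dotProduct_mulVec, ← mulVec_transpose]
      exact dotProduct_self_eq_zero.mp (hE'.symm.trans hE)
    have hA0 : Aᵀ *ᵥ x = 0 := key1 A z1
    have hB0 : Bᵀ *ᵥ x = 0 := key1 B z2
    calc x = (D * Aᵀ - C * Bᵀ) *ᵥ x := by rw [hADtT, one_mulVec]
    _ = D *ᵥ (Aᵀ *ᵥ x) - C *ᵥ (Bᵀ *ᵥ x) := by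
        rw [sub_mulVec, ← mulVec_mulVec, ← mulVec_mulVec]
    _ = 0 := by rw [hA0, hB0, mulVec_zero, mulVec_zero, sub_zero]
  have hMpd : Mm.PosDef := aux_posDef (hps1.add hps2) hMinj
  have hMdet : IsUnit Mm.det := isUnit_iff_ne_zero.mpr hMpd.det_pos.ne'
  have hMM1 : Mm * Mm⁻¹ = 1 := mul_nonsing_inv _ hMdet
  have hM1M : Mm⁻¹ * Mm = 1 := nonsing_inv_mul _ hMdet
  have hMsymm : Mmᵀ = Mm := by
    rw [hMdef]; simp [transpose_add, transpose_mul, ← mul_assoc]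
  have hMinvsymm : (Mm⁻¹)ᵀ = Mm⁻¹ := by rw [transpose_nonsing_inv, hMsymm]
  have hYX : Y = Xᵀ := by rw [hXdef, hYdef]; simp [transpose_add, transpose_mul]
  have hcomm : Y * Mm⁻¹ = Mm⁻¹ * X := by
    calc Y * Mm⁻¹ = Mm⁻¹ * (Mm * Y) * Mm⁻¹ := by rw [← mul_assoc, hM1M, one_mul]
    _ = Mm⁻¹ * (X * Mm) * Mm⁻¹ := by rw [hMY]
    _ = Mm⁻¹ * X := by rw [mul_assoc (Mm⁻¹) (X * Mm), mul_assoc X Mm, hMM1, mul_one]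
  -- the canonical P
  have hP0symm : (-(Y * Mm⁻¹))ᵀ = -(Y * Mm⁻¹) := by
    rw [transpose_neg, transpose_mul, hMinvsymm, hYX, transpose_transpose, ← hcomm, ← hYX]
  have hPA : -(-(Y * Mm⁻¹) * A) - Mm⁻¹ * B = C := by
    have h7 : -(-(Y * Mm⁻¹) * A) - Mm⁻¹ * B = Mm⁻¹ * X * A - Mm⁻¹ * B := by
      rw [hcomm]; noncomm_ring
    rw [h7]
    calc Mm⁻¹ * X * A - Mm⁻¹ * B = Mm⁻¹ * (X * A - B) := by noncomm_ring
    _ = Mm⁻¹ * (Mm * C) := by rw [hMC]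
    _ = C := by rw [← mul_assoc, hM1M, one_mul]
  have hPB : -(-(Y * Mm⁻¹) * B) + Mm⁻¹ * A = D := by
    have h7 : -(-(Y * Mm⁻¹) * B) + Mm⁻¹ * A = Mm⁻¹ * (X * B + A) := by
      rw [hcomm]; noncomm_ring
    rw [h7, ← hMD, ← mul_assoc, hM1M, one_mul]
  -- the canonical L
  have hMipsd : (Mm⁻¹).PosSemidef := hMpd.inv.posSemidef
  set L₀ := (open MatrixOrder in CFC.sqrt (Mm⁻¹)) with hL0def
  have hL0sq : L₀ * L₀ = Mm⁻¹ := (open MatrixOrder in CFC.sqrt_mul_sqrt_self _ hMipsd.nonneg)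
  have hL0psd : L₀.PosSemidef := (open MatrixOrder in ((CFC.sqrt_nonneg (Mm⁻¹) : (0 : Matrix (Fin n) (Fin n) ℝ) ≤ CFC.sqrt (Mm⁻¹))).posSemidef)
  have hL0symm : L₀ᵀ = L₀ := by
    have h := hL0psd.1.eq
    rwa [conjTranspose_eq_transpose_of_trivial] at h
  have hL0inj : ∀ x, L₀ *ᵥ x = 0 → x = 0 := by
    intro x hx
    have h8 : Mm⁻¹ *ᵥ x = 0 := by
      rw [← hL0sq, ← mulVec_mulVec, hx, mulVec_zero]
    calc x = 1 *ᵥ x := (one_mulVec x).symm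
    _ = Mm *ᵥ (Mm⁻¹ *ᵥ x) := by rw [mulVec_mulVec, hMM1]
    _ = 0 := by rw [h8, mulVec_zero]
  have hL0pd : L₀.PosDef := aux_posDef hL0psd hL0inj
  have hL0det : IsUnit L₀.det := isUnit_iff_ne_zero.mpr hL0pd.det_pos.ne'
  have hL0i1 : L₀⁻¹ * L₀ = 1 := nonsing_inv_mul _ hL0det
  have hL0i2 : L₀ * L₀⁻¹ = 1 := mul_nonsing_inv _ hL0det
  have hLML : L₀ * Mm * L₀ = 1 := by
    have h5 : L₀ * (L₀ * Mm) = 1 := by rw [← mul_assoc, hL0sq, hM1M]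
    have h6 : L₀ * Mm * L₀ = 1 := mul_eq_one_comm.mpr h5
    exact h6
  -- the canonical R
  set R₀ := fromBlocks (L₀ * A) (L₀ * B) (-(L₀ * B)) (L₀ * A) with hR0def
  have hR0t : R₀ᵀ = fromBlocks (Aᵀ * L₀) (-(Bᵀ * L₀)) (Bᵀ * L₀) (Aᵀ * L₀) := by
    rw [hR0def, fromBlocks_transpose, transpose_neg, transpose_mul, transpose_mul, hL0symm]
  have hR0Rt : R₀ * R₀ᵀ = 1 := by
    rw [hR0t, hR0def, fromBlocks_multiply, ← fromBlocks_one]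
    refine fromBlocks_inj.mpr ⟨?_, ?_, ?_, ?_⟩
    · have h9 : L₀ * A * (Aᵀ * L₀) + L₀ * B * (Bᵀ * L₀) = L₀ * (A * Aᵀ + B * Bᵀ) * L₀ := by
        noncomm_ring
      rw [h9, ← hMdef, hLML]
    · have h9 : L₀ * A * (-(Bᵀ * L₀)) + L₀ * B * (Aᵀ * L₀) = L₀ * (B * Aᵀ - A * Bᵀ) * L₀ := by
        noncomm_ring
      rw [h9, hABt, sub_self, mul_zero, zero_mul]
    · have h9 : -(L₀ * B) * (Aᵀ * L₀) + L₀ * A * (Bᵀ * L₀) = L₀ * (A * Bᵀ - B * Aᵀ) * L₀ := by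
        noncomm_ring
      rw [h9, hABt, sub_self, mul_zero, zero_mul]
    · have h9 : -(L₀ * B) * (-(Bᵀ * L₀)) + L₀ * A * (Aᵀ * L₀) = L₀ * (A * Aᵀ + B * Bᵀ) * L₀ := by
        noncomm_ring
      rw [h9, ← hMdef, hLML]
  have hR0orth : R₀ᵀ * R₀ = 1 := mul_eq_one_comm.mp hR0Rt
  have hcommJ : R₀ * Jm = Jm * R₀ := by
    rw [hR0def, hJdef]; simp [stdJ, fromBlocks_multiply]
  have hR0symp : IsSymplecticMat R₀ := by
    show R₀ᵀ * stdJ n * R₀ = stdJ n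
    rw [← hJdef, mul_assoc, ← hcommJ, ← mul_assoc, hR0orth, one_mul]
  have hW : VP (-(Y * Mm⁻¹)) * ML L₀ = fromBlocks L₀⁻¹ 0 (Y * Mm⁻¹ * L₀⁻¹) L₀ := by
    simp [VP, ML, fromBlocks_multiply]
  have hWR : fromBlocks L₀⁻¹ 0 (Y * Mm⁻¹ * L₀⁻¹) L₀ * R₀ = fromBlocks A B C D := by
    rw [hR0def, fromBlocks_multiply]
    have g1 : L₀⁻¹ * (L₀ * A) + 0 * (-(L₀ * B)) = A := by
      have h9 : L₀⁻¹ * (L₀ * A) + 0 * (-(L₀ * B)) = L₀⁻¹ * L₀ * A := by noncomm_ring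
      rw [h9, hL0i1, one_mul]
    have g2 : L₀⁻¹ * (L₀ * B) + 0 * (L₀ * A) = B := by
      have h9 : L₀⁻¹ * (L₀ * B) + 0 * (L₀ * A) = L₀⁻¹ * L₀ * B := by noncomm_ring
      rw [h9, hL0i1, one_mul]
    have g3 : Y * Mm⁻¹ * L₀⁻¹ * (L₀ * A) + L₀ * (-(L₀ * B)) = C := by
      have h9 : Y * Mm⁻¹ * L₀⁻¹ * (L₀ * A) + L₀ * (-(L₀ * B))
          = Y * Mm⁻¹ * (L₀⁻¹ * L₀) * A - L₀ * L₀ * B := by noncomm_ring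
      rw [h9, hL0i1, mul_one, hL0sq, ← hPA]; noncomm_ring
    have g4 : Y * Mm⁻¹ * L₀⁻¹ * (L₀ * B) + L₀ * (L₀ * A) = D := by
      have h9 : Y * Mm⁻¹ * L₀⁻¹ * (L₀ * B) + L₀ * (L₀ * A)
          = Y * Mm⁻¹ * (L₀⁻¹ * L₀) * B + L₀ * L₀ * A := by noncomm_ring
      rw [h9, hL0i1, mul_one, hL0sq, ← hPB]; noncomm_ring
    rw [g1, g2, g3, g4]
  have hprod : fromBlocks A B C D = VP (-(Y * Mm⁻¹)) * ML L₀ * R₀ := by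
    rw [hW, hWR]
  have hdecomp : PreIwasawaDecomp A B C D (-(Y * Mm⁻¹), L₀, R₀) :=
    ⟨hP0symm, hL0symm, hL0pd, hR0symp, hR0orth, hprod⟩
  -- the general formulas
  have key : ∀ P L : Matrix (Fin n) (Fin n) ℝ, ∀ R : Matrix (Fin n ⊕ Fin n) (Fin n ⊕ Fin n) ℝ,
      PreIwasawaDecomp A B C D (P, L, R) →
        L * L = Mm⁻¹ ∧ P = -(Y * Mm⁻¹) ∧ R = fromBlocks (L * A) (L * B) (-(L * B)) (L * A) := by
    intro P L R h
    obtain ⟨hPs, hLs, hLpd, hRsymp, hRorth, hEq⟩ := h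
    have hLdet : IsUnit L.det := isUnit_iff_ne_zero.mpr hLpd.det_pos.ne'
    have hLi1 : L⁻¹ * L = 1 := nonsing_inv_mul _ hLdet
    have hLi2 : L * L⁻¹ = 1 := mul_nonsing_inv _ hLdet
    have hLsym : Lᵀ = L := hLs
    have hPsym : Pᵀ = P := hPs
    have hLinvsym : (L⁻¹)ᵀ = L⁻¹ := by rw [transpose_nonsing_inv, hLsym]
    have hRRt : R * Rᵀ = 1 := mul_eq_one_comm.mp hRorth
    have hWp : VP P * ML L = fromBlocks L⁻¹ 0 (-(P * L⁻¹)) L := by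
      simp [VP, ML, fromBlocks_multiply]
    have hSW : S = fromBlocks L⁻¹ 0 (-(P * L⁻¹)) L * R := by
      rw [hSdef]; rw [hEq, hWp]
    have hWt : (fromBlocks L⁻¹ 0 (-(P * L⁻¹)) L)ᵀ = fromBlocks L⁻¹ (-(L⁻¹ * P)) 0 L := by
      rw [fromBlocks_transpose, transpose_neg, transpose_mul, hLinvsym, hPsym, hLsym,
        transpose_zero]
    have hSSt2 : fromBlocks Mm X Y Nn
        = fromBlocks L⁻¹ 0 (-(P * L⁻¹)) L * fromBlocks L⁻¹ (-(L⁻¹ * P)) 0 L := by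
      have h9 : S * Sᵀ = fromBlocks L⁻¹ 0 (-(P * L⁻¹)) L * (R * Rᵀ)
          * (fromBlocks L⁻¹ 0 (-(P * L⁻¹)) L)ᵀ := by
        rw [hSW, transpose_mul]; noncomm_ring
      rw [hRRt, mul_one, hWt] at h9
      rw [← hSSt, h9]
    rw [fromBlocks_multiply] at hSSt2
    obtain ⟨g1, g2, g3, g4⟩ := fromBlocks_inj.mp hSSt2
    have hMLL : Mm = (L * L)⁻¹ := by
      rw [g1, Matrix.mul_inv_rev]; simp
    have hLLdet : IsUnit (L * L).det := by rw [det_mul]; exact hLdet.mul hLdet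
    have c1 : L * L = Mm⁻¹ := by rw [hMLL, nonsing_inv_nonsing_inv _ hLLdet]
    have hYP : Y = -(P * Mm) := by
      rw [g3]
      have h9 : -(P * L⁻¹) * L⁻¹ + L * 0 = -(P * (L⁻¹ * L⁻¹)) := by noncomm_ring
      rw [h9]
      congr 2
      rw [hMLL, Matrix.mul_inv_rev]
    have c2 : P = -(Y * Mm⁻¹) := by
      rw [hYP]
      have h9 : -(-(P * Mm) * Mm⁻¹) = P * (Mm * Mm⁻¹) := by noncomm_ring
      rw [h9, hMM1, mul_one]
    refine ⟨c1, c2, ?_⟩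
    have hCform : C = -(P * A) - Mm⁻¹ * B := by rw [c2]; exact hPA.symm
    have hDform : D = -(P * B) + Mm⁻¹ * A := by rw [c2]; exact hPB.symm
    have hW'W : fromBlocks L 0 (L⁻¹ * P) L⁻¹ * fromBlocks L⁻¹ 0 (-(P * L⁻¹)) L = 1 := by
      rw [fromBlocks_multiply, ← fromBlocks_one]
      refine fromBlocks_inj.mpr ⟨?_, ?_, ?_, ?_⟩
      · have h9 : L * L⁻¹ + 0 * (-(P * L⁻¹)) = L * L⁻¹ := by noncomm_ring
        rw [h9, hLi2]
      · have h9 : L * 0 + 0 * L = (0 : Matrix (Fin n) (Fin n) ℝ) := by noncomm_ring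
        rw [h9]
      · have h9 : L⁻¹ * P * L⁻¹ + L⁻¹ * (-(P * L⁻¹)) = (0 : Matrix (Fin n) (Fin n) ℝ) := by
          noncomm_ring
        rw [h9]
      · have h9 : L⁻¹ * P * 0 + L⁻¹ * L = L⁻¹ * L := by noncomm_ring
        rw [h9, hLi1]
    have hRW : R = fromBlocks L 0 (L⁻¹ * P) L⁻¹ * S := by
      have h9 : fromBlocks L 0 (L⁻¹ * P) L⁻¹ * S
          = fromBlocks L 0 (L⁻¹ * P) L⁻¹ * (fromBlocks L⁻¹ 0 (-(P * L⁻¹)) L * R) := by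
        rw [← hSW]
      rw [← mul_assoc, hW'W, one_mul] at h9
      exact h9.symm
    rw [hRW, hSdef, fromBlocks_multiply]
    refine fromBlocks_inj.mpr ⟨?_, ?_, ?_, ?_⟩
    · noncomm_ring
    · noncomm_ring
    · rw [hCform, ← c1]
      have h9 : L⁻¹ * P * A + L⁻¹ * (-(P * A) - L * L * B) = -(L⁻¹ * L * (L * B)) := by
        noncomm_ring
      rw [h9, hLi1, one_mul]
    · rw [hDform, ← c1]
      have h9 : L⁻¹ * P * B + L⁻¹ * (-(P * B) + L * L * A) = L⁻¹ * L * (L * A) := by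
        noncomm_ring
      rw [h9, hLi1, one_mul]
  constructor
  · refine ⟨(-(Y * Mm⁻¹), L₀, R₀), hdecomp, ?_⟩
    rintro ⟨P, L, R⟩ hy
    obtain ⟨c1, c2, c3⟩ := key P L R hy
    have hLL0 : L = L₀ := by
      have hsq : L ^ 2 = L₀ ^ 2 := by rw [pow_two, pow_two, c1, hL0sq]
      exact (open MatrixOrder in ((CFC.sqrt_mul_self L ((nonneg_iff_posSemidef (A := L)).mpr hy.2.2.1.posSemidef)).symm.trans (congrArg (CFC.sqrt (A := Matrix (Fin n) (Fin n) ℝ)) c1) : L = CFC.sqrt (Mm⁻¹)))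
    simp only [Prod.mk.injEq]
    exact ⟨c2, hLL0, by rw [c3, hLL0, hR0def]⟩
  · intro P L R h
    exact key P L R h
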